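/- Let X be a Hilbert space, T ∈ B(X) with a {1,3,7}-inverse S, and δT ∈ B(X) with I + S·δT invertible. If B = (I + S·δT)⁻¹S is a {1,3,7}-inverse of T̄ = T + δT, then R(T̄) = R(T). -/

import Mathlib

theorem stmt_13 {X : Type*} [NormedAddCommGroup X] [InnerProductSpace ℂ X]
    [CompleteSpace X] (T S δT : X →L[ℂ] X)
    (h1 : T * S * T = T)
    (h3 : ContinuousLinearMap.adjoint (T * S) = T * S)
    (h7 : T * S * S = S)
    (hinv : IsUnit (1 + S * δT))
    (hB1 : (T + δT) * (Ring.inverse (1 + S * δT) * S) * (T + δT) = T + δT)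
    (hB3 : ContinuousLinearMap.adjoint ((T + δT) * (Ring.inverse (1 + S * δT) * S)) =
      (T + δT) * (Ring.inverse (1 + S * δT) * S))
    (hB7 : (T + δT) * (Ring.inverse (1 + S * δT) * S) * (Ring.inverse (1 + S * δT) * S) =
      Ring.inverse (1 + S * δT) * S) :
    LinearMap.range ((T + δT : X →L[ℂ] X) : X →ₗ[ℂ] X) = LinearMap.range (T : X →ₗ[ℂ] X) := by
  set u := Ring.inverse (1 + S * δT) with hudef
  have hu1 : (1 + S * δT) * u = 1 := Ring.mul_inverse_cancel _ hinv
  have hu2 : u * (1 + S * δT) = 1 := Ring.inverse_mul_cancel _ hinv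
  set P := T * S with hPdef
  set Q := (T + δT) * (u * S) with hQdef
  set w := 1 - δT * (u * S) with hwdef
  have hPidem : P * P = P := by
    calc P * P = T * S * T * S := by rw [hPdef]; noncomm_ring
    _ = P := by rw [h1, hPdef]
  have hQidem : Q * Q = Q := by
    calc Q * Q = (T + δT) * (u * S) * (T + δT) * (u * S) := by rw [hQdef]; noncomm_ring
    _ = Q := by rw [hB1, hQdef]
  have hQW : Q * (1 + δT * S) = P + δT * S := by
    calc Q * (1 + δT * S) = (T + δT) * ((u * (1 + S * δT)) * S) := by
          rw [hQdef]; noncomm_ring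
    _ = P + δT * S := by rw [hu2, hPdef]; noncomm_ring
  have h1Q : (1 - Q) * (1 + δT * S) = 1 - P := by
    rw [sub_mul, one_mul, hQW]; noncomm_ring
  have hWw : (1 + δT * S) * w = 1 := by
    calc (1 + δT * S) * w = 1 + δT * S - δT * (u * S) - δT * (S * (δT * (u * S))) := by
          rw [hwdef]; noncomm_ring
    _ = 1 + δT * S - δT * (((1 + S * δT) * u) * S) := by noncomm_ring
    _ = 1 := by rw [hu1]; noncomm_ring
  have h1P : 1 - Q = (1 - P) * w := by
    calc 1 - Q = (1 - Q) * ((1 + δT * S) * w) := by rw [hWw, mul_one]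
    _ = ((1 - Q) * (1 + δT * S)) * w := by rw [mul_assoc]
    _ = (1 - P) * w := by rw [h1Q]
  -- adjoints
  have hadj1P : ContinuousLinearMap.adjoint (1 - P) = 1 - P := by
    rw [map_sub, h3, hPdef]
    congr 1
    simp [ContinuousLinearMap.one_def, ContinuousLinearMap.adjoint_id]
  have hadj1Q : ContinuousLinearMap.adjoint (1 - Q) = 1 - Q := by
    rw [map_sub, hB3, hQdef]
    congr 1
    simp [ContinuousLinearMap.one_def, ContinuousLinearMap.adjoint_id]
  have hmuladj : ∀ A B : X →L[ℂ] X, ContinuousLinearMap.adjoint (A * B) =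
      ContinuousLinearMap.adjoint B * ContinuousLinearMap.adjoint A := by
    intro A B
    exact ContinuousLinearMap.adjoint_comp A B
  have h1Q' : 1 - Q = ContinuousLinearMap.adjoint w * (1 - P) := by
    conv_lhs => rw [← hadj1Q, h1P]
    rw [hmuladj, hadj1P]
  have h1P' : 1 - P = ContinuousLinearMap.adjoint (1 + δT * S) * (1 - Q) := by
    conv_lhs => rw [← hadj1P, ← h1Q]
    rw [hmuladj, hadj1Q]
  -- fixed points
  have hfix : ∀ x : X, P x = x ↔ Q x = x := by
    intro x
    constructor
    · intro hx
      have : (1 - Q) x = 0 := by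
        rw [h1Q', ContinuousLinearMap.mul_apply]
        have : (1 - P) x = 0 := by simp [ContinuousLinearMap.sub_apply, hx]
        rw [this, map_zero]
      have h0 : x - Q x = 0 := by simpa [ContinuousLinearMap.sub_apply] using this
      exact (sub_eq_zero.mp h0).symm
    · intro hx
      have : (1 - P) x = 0 := by
        rw [h1P', ContinuousLinearMap.mul_apply]
        have : (1 - Q) x = 0 := by simp [ContinuousLinearMap.sub_apply, hx]
        rw [this, map_zero]
      have h0 : x - P x = 0 := by simpa [ContinuousLinearMap.sub_apply] using this
      exact (sub_eq_zero.mp h0).symm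
  -- ranges
  have hrange : ∀ (A B : X →L[ℂ] X), A * A = A → A * B = B →
      (∀ x, x ∈ LinearMap.range (B : X →ₗ[ℂ] X) → ∃ y, A y = x) → True := fun _ _ _ _ _ => trivial
  ext x
  simp only [LinearMap.mem_range]
  constructor
  · rintro ⟨y, rfl⟩
    have hQfix : Q ((T + δT) y) = (T + δT) y := by
      have : Q * (T + δT) = T + δT := by rw [hQdef]; exact hB1
      calc Q ((T + δT) y) = (Q * (T + δT)) y := rfl
      _ = (T + δT) y := by rw [this]
    have hPfix := (hfix _).mpr hQfix
    exact ⟨S ((T + δT) y), hPfix⟩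
  · rintro ⟨y, rfl⟩
    have hPfix : P (T y) = T y := by
      have : P * T = T := by rw [hPdef]; exact h1
      calc P (T y) = (P * T) y := rfl
      _ = T y := by rw [this]
    have hQfix := (hfix _).mp hPfix
    exact ⟨(u * S) (T y), hQfix⟩
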